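/- Let H be the Hilbert space ℓ² direct sum of countably many copies of ℝ² (sequences (z_j)_{j≥0} with z_j ∈ ℝ² and ∑‖z_j‖² < ∞). There exist closed subspaces U and V of H with U ∩ V = {0} such that for every α > 1/2 there exists z^0 ∈ H with the following property: defining the Douglas–Rachford operator T(z) := (1/2)(z + R_V(R_U(z))), where R_W := 2P_W − I and P_W is the orthogonal projection onto the closed subspace W, and the iterates z^{k+1} := T(z^k), one has ‖T z^k − z^k‖² ≥ 1/(k+1)^{2α} for all k ≥ 1. -/

import Mathlib

noncomputable section

open scoped ENNReal

namespace DRSaux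

abbrev E2 : Type := EuclideanSpace ℝ (Fin 2)
abbrev Hsp : Type := lp (fun _ : ℕ => E2) 2

def mk2 (a b : ℝ) : E2 := (WithLp.equiv 2 (Fin 2 → ℝ)).symm ![a, b]

@[simp] lemma mk2_apply0 (a b : ℝ) : mk2 a b 0 = a := rfl
@[simp] lemma mk2_apply1 (a b : ℝ) : mk2 a b 1 = b := rfl

lemma enorm2 (x : E2) : ‖x‖ ^ 2 = x 0 ^ 2 + x 1 ^ 2 := by
  rw [EuclideanSpace.norm_eq]
  rw [Real.sq_sqrt (by positivity)]
  simp [Fin.sum_univ_two, sq_abs]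

lemma einner2 (x y : E2) : (inner ℝ x y : ℝ) = x 0 * y 0 + x 1 * y 1 := by
  simp [PiLp.inner_apply, Fin.sum_univ_two, RCLike.inner_apply]
  ring


def sb (j : ℕ) : ℝ := Real.sqrt (1 / (j + 1))
def cb (j : ℕ) : ℝ := Real.sqrt (1 - 1 / (j + 1))

lemma t_pos (j : ℕ) : 0 < 1 / ((j : ℝ) + 1) := by positivity
lemma t_le_one (j : ℕ) : 1 / ((j : ℝ) + 1) ≤ 1 := by
  rw [div_le_one (by positivity)]; linarith [Nat.cast_nonneg (α := ℝ) j]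

lemma sb_sq (j : ℕ) : sb j ^ 2 = 1 / ((j : ℝ) + 1) := by
  rw [sb, Real.sq_sqrt (t_pos j).le]
lemma cb_sq (j : ℕ) : cb j ^ 2 = 1 - 1 / ((j : ℝ) + 1) := by
  rw [cb, Real.sq_sqrt (by linarith [t_le_one j])]
lemma sb_pos (j : ℕ) : 0 < sb j := Real.sqrt_pos.2 (t_pos j)
lemma cb_nonneg (j : ℕ) : 0 ≤ cb j := Real.sqrt_nonneg _
lemma sb_nonneg (j : ℕ) : 0 ≤ sb j := Real.sqrt_nonneg _
lemma pyth (j : ℕ) : cb j ^ 2 + sb j ^ 2 = 1 := by rw [sb_sq, cb_sq]; ring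
lemma cb_sq' (j : ℕ) : cb j ^ 2 = 1 - sb j ^ 2 := by rw [sb_sq, cb_sq]

/-- blockwise projection onto span e₀ -/
def pU (w : E2) : E2 := mk2 (w 0) 0
/-- blockwise projection onto span (cb j, sb j) -/
def pV (j : ℕ) (w : E2) : E2 :=
  mk2 (cb j * (cb j * w 0 + sb j * w 1)) (sb j * (cb j * w 0 + sb j * w 1))

lemma pU_norm_le (w : E2) : ‖pU w‖ ≤ ‖w‖ := by
  rw [← Real.sqrt_sq (norm_nonneg (pU w)), ← Real.sqrt_sq (norm_nonneg w)]
  apply Real.sqrt_le_sqrt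
  rw [enorm2, enorm2]
  simp only [pU, mk2_apply0, mk2_apply1]
  nlinarith [sq_nonneg (w 1)]

lemma pV_norm_le (j : ℕ) (w : E2) : ‖pV j w‖ ≤ ‖w‖ := by
  rw [← Real.sqrt_sq (norm_nonneg (pV j w)), ← Real.sqrt_sq (norm_nonneg w)]
  apply Real.sqrt_le_sqrt
  rw [enorm2, enorm2]
  simp only [pV, mk2_apply0, mk2_apply1]
  nlinarith [sq_nonneg (sb j * w 0 - cb j * w 1), pyth j, sq_nonneg (cb j * w 0 + sb j * w 1)]

/-- the blockwise DR operator in closed form -/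
def Tb (j : ℕ) (w : E2) : E2 :=
  mk2 (cb j * (cb j * w 0 - sb j * w 1)) (cb j * (sb j * w 0 + cb j * w 1))

lemma Tb_norm_sq (j : ℕ) (w : E2) : ‖Tb j w‖ ^ 2 = cb j ^ 2 * ‖w‖ ^ 2 := by
  rw [enorm2, enorm2]
  simp only [Tb, mk2_apply0, mk2_apply1]
  linear_combination (cb j ^ 2 * (w 0 ^ 2 + w 1 ^ 2)) * cb_sq' j

lemma Tb_sub_norm_sq (j : ℕ) (w : E2) : ‖Tb j w - w‖ ^ 2 = sb j ^ 2 * ‖w‖ ^ 2 := by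
  rw [enorm2, enorm2]
  have h0 : (Tb j w - w) 0 = cb j * (cb j * w 0 - sb j * w 1) - w 0 := rfl
  have h1 : (Tb j w - w) 1 = cb j * (sb j * w 0 + cb j * w 1) - w 1 := rfl
  rw [h0, h1]
  linear_combination ((w 0 ^ 2 + w 1 ^ 2) * (cb j ^ 2 - 1)) * cb_sq' j

/-- extensionality for E2 -/
lemma ext2 {x y : E2} (h0 : x 0 = y 0) (h1 : x 1 = y 1) : x = y := by
  ext i
  fin_cases i
  · exact h0
  · exact h1

/-- the DR formula blockwise -/
lemma Tb_formula (j : ℕ) (w : E2) :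
    (1 / 2 : ℝ) • (w + ((2 : ℝ) • pV j ((2 : ℝ) • pU w - w) - ((2 : ℝ) • pU w - w)))
      = Tb j w := by
  have hp := cb_sq' j
  have e0 : ((2:ℝ) • pU w - w) 0 = 2 * w 0 - w 0 := rfl
  have e1 : ((2:ℝ) • pU w - w) 1 = 2 * 0 - w 1 := rfl
  apply ext2
  · simp only [PiLp.smul_apply, PiLp.add_apply, PiLp.sub_apply, smul_eq_mul,
      pV, mk2_apply0, mk2_apply1, e0, e1, Tb]
    ring
  · simp only [PiLp.smul_apply, PiLp.add_apply, PiLp.sub_apply, smul_eq_mul,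
      pV, mk2_apply0, mk2_apply1, e0, e1, Tb]
    linear_combination (-(w 1)) * hp

lemma memℓp_of_le {f g : ∀ _ : ℕ, E2} (hg : Memℓp g 2) (h : ∀ i, ‖f i‖ ≤ ‖g i‖) :
    Memℓp f 2 := by
  apply memℓp_gen
  have hs := hg.summable (p := 2) (by norm_num)
  refine hs.of_nonneg_of_le (fun i => ?_) (fun i => ?_)
  · positivity
  · have := h i
    have h2 : (2 : ℝ≥0∞).toReal = 2 := by norm_num
    rw [h2]
    gcongr

/-- global projection onto U -/
def PUg (x : Hsp) : Hsp := ⟨fun j => pU (x j), memℓp_of_le (lp.memℓp x) (fun j => pU_norm_le _)⟩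
/-- global projection onto V -/
def PVg (x : Hsp) : Hsp := ⟨fun j => pV j (x j), memℓp_of_le (lp.memℓp x) (fun j => pV_norm_le _ _)⟩

@[simp] lemma PUg_apply (x : Hsp) (j : ℕ) : PUg x j = pU (x j) := rfl
@[simp] lemma PVg_apply (x : Hsp) (j : ℕ) : PVg x j = pV j (x j) := rfl

/-- the subspace U -/
def Usub : Submodule ℝ Hsp where
  carrier := {x | ∀ j, x j 1 = 0}
  add_mem' := by
    intro a b ha hb j
    have : (a + b) j 1 = a j 1 + b j 1 := by rw [lp.coeFn_add]; rfl
    rw [this, ha j, hb j, add_zero]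
  zero_mem' := by intro j; rfl
  smul_mem' := by
    intro r a ha j
    have : (r • a) j 1 = r * a j 1 := by rw [lp.coeFn_smul]; rfl
    rw [this, ha j, mul_zero]

/-- the subspace V -/
def Vsub : Submodule ℝ Hsp where
  carrier := {x | ∀ j, sb j * x j 0 = cb j * x j 1}
  add_mem' := by
    intro a b ha hb j
    have h0 : (a + b) j 0 = a j 0 + b j 0 := by rw [lp.coeFn_add]; rfl
    have h1 : (a + b) j 1 = a j 1 + b j 1 := by rw [lp.coeFn_add]; rfl
    rw [h0, h1, mul_add, mul_add, ha j, hb j]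
  zero_mem' := by intro j; show sb j * 0 = cb j * 0; rw [mul_zero, mul_zero]
  smul_mem' := by
    intro r a ha j
    have h0 : (r • a) j 0 = r * a j 0 := by rw [lp.coeFn_smul]; rfl
    have h1 : (r • a) j 1 = r * a j 1 := by rw [lp.coeFn_smul]; rfl
    rw [h0, h1]
    rw [mul_left_comm, ha j, mul_left_comm]

lemma continuous_eval (j : ℕ) (i : Fin 2) : Continuous (fun x : Hsp => x j i) := by
  have h1 : LipschitzWith 1 (fun x : Hsp => x j) := by
    intro x y
    rw [edist_dist, edist_dist]
    simp only [ENNReal.coe_one, one_mul, ENNReal.ofReal_le_ofReal_iff dist_nonneg]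
    rw [dist_eq_norm, dist_eq_norm]
    have : x j - y j = (x - y) j := by rw [lp.coeFn_sub]; rfl
    rw [this]
    exact lp.norm_apply_le_norm (by norm_num) (x - y) j
  exact (EuclideanSpace.proj (𝕜 := ℝ) i).continuous.comp h1.continuous

lemma Usub_closed : IsClosed (Usub : Set Hsp) := by
  have : (Usub : Set Hsp) = ⋂ j, {x : Hsp | x j 1 = 0} := by
    ext x; simp [Usub, Set.mem_iInter]; rfl
  rw [this]
  exact isClosed_iInter fun j =>
    isClosed_eq (continuous_eval j 1) continuous_const

lemma Vsub_closed : IsClosed (Vsub : Set Hsp) := by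
  have : (Vsub : Set Hsp) = ⋂ j, {x : Hsp | sb j * x j 0 = cb j * x j 1} := by
    ext x; simp [Vsub, Set.mem_iInter]
  rw [this]
  exact isClosed_iInter fun j =>
    isClosed_eq (continuous_const.mul (continuous_eval j 0))
      (continuous_const.mul (continuous_eval j 1))

lemma UV_inf : Usub ⊓ Vsub = ⊥ := by
  rw [eq_bot_iff]
  intro x hx
  obtain ⟨hU, hV⟩ := hx
  have hU : ∀ j, x j 1 = 0 := hU
  have hV : ∀ j, sb j * x j 0 = cb j * x j 1 := hV
  have : ∀ j, x j = 0 := by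
    intro j
    apply ext2
    · have := hV j
      rw [hU j, mul_zero] at this
      have h0 := (mul_eq_zero.1 this).resolve_left (sb_pos j).ne'
      simpa using h0
    · simpa using hU j
  have : (x : ∀ _ : ℕ, E2) = 0 := funext this
  simpa [Submodule.mem_bot] using lp.ext (f := x) (g := 0) (by rw [lp.coeFn_zero]; exact this)

lemma norm_sq_eq_tsum (f : Hsp) : ‖f‖ ^ 2 = ∑' j, ‖f j‖ ^ 2 := by
  have h1 : (inner ℝ f f : ℝ) = ∑' j, (inner ℝ (f j) (f j) : ℝ) := lp.inner_eq_tsum f f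
  rw [real_inner_self_eq_norm_sq] at h1
  rw [h1]
  congr 1
  funext j
  rw [real_inner_self_eq_norm_sq]

lemma PUg_mem (x : Hsp) : PUg x ∈ Usub := fun _ => rfl

lemma PUg_orth (x : Hsp) : x - PUg x ∈ Usubᗮ := by
  rw [Submodule.mem_orthogonal]
  intro u hu
  have hu : ∀ j, u j 1 = 0 := hu
  have h1 : (inner ℝ u (x - PUg x) : ℝ) = ∑' j, (inner ℝ (u j) ((x - PUg x) j) : ℝ) :=
    lp.inner_eq_tsum u (x - PUg x)
  rw [h1]
  have : ∀ j, (inner ℝ (u j) ((x - PUg x) j) : ℝ) = 0 := by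
    intro j
    have hj : (x - PUg x) j = x j - pU (x j) := by rw [lp.coeFn_sub]; rfl
    rw [hj, einner2]
    have e0 : (x j - pU (x j)) 0 = x j 0 - x j 0 := rfl
    have e1 : (x j - pU (x j)) 1 = x j 1 - 0 := rfl
    rw [e0, e1, hu j]
    ring
  rw [tsum_congr this, tsum_zero]

lemma PVg_mem (x : Hsp) : PVg x ∈ Vsub := by
  intro j
  show sb j * pV j (x j) 0 = cb j * pV j (x j) 1
  simp only [pV, mk2_apply0, mk2_apply1]
  ring

lemma PVg_orth (x : Hsp) : x - PVg x ∈ Vsubᗮ := by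
  rw [Submodule.mem_orthogonal]
  intro u hu
  have hu : ∀ j, sb j * u j 0 = cb j * u j 1 := hu
  have h1 : (inner ℝ u (x - PVg x) : ℝ) = ∑' j, (inner ℝ (u j) ((x - PVg x) j) : ℝ) :=
    lp.inner_eq_tsum u (x - PVg x)
  rw [h1]
  have : ∀ j, (inner ℝ (u j) ((x - PVg x) j) : ℝ) = 0 := by
    intro j
    have hj : (x - PVg x) j = x j - pV j (x j) := by rw [lp.coeFn_sub]; rfl
    rw [hj, einner2]
    have e0 : (x j - pV j (x j)) 0 = x j 0 - cb j * (cb j * x j 0 + sb j * x j 1) := rfl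
    have e1 : (x j - pV j (x j)) 1 = x j 1 - sb j * (cb j * x j 0 + sb j * x j 1) := rfl
    rw [e0, e1]
    have hp := cb_sq' j
    linear_combination (sb j * x j 0 - cb j * x j 1) * hu j
      - (u j 0 * x j 0 + u j 1 * x j 1) * hp
  rw [tsum_congr this, tsum_zero]

lemma rec_block (z : ℕ → Hsp)
    (hrec : ∀ k : ℕ, z (k + 1) = (1 / 2 : ℝ) •
      (z k + ((2 : ℝ) • PVg ((2 : ℝ) • PUg (z k) - z k) - ((2 : ℝ) • PUg (z k) - z k))))
    (k : ℕ) (j : ℕ) : z (k + 1) j = Tb j (z k j) := by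
  rw [hrec k, ← Tb_formula j (z k j)]
  have hy : ((2 : ℝ) • PUg (z k) - z k) j = (2 : ℝ) • pU (z k j) - z k j := by
    rw [lp.coeFn_sub, lp.coeFn_smul]; rfl
  have : ((1 / 2 : ℝ) • (z k + ((2 : ℝ) • PVg ((2 : ℝ) • PUg (z k) - z k)
      - ((2 : ℝ) • PUg (z k) - z k)))) j
      = (1 / 2 : ℝ) • (z k j + ((2 : ℝ) • pV j (((2 : ℝ) • PUg (z k) - z k) j)
      - ((2 : ℝ) • PUg (z k) - z k) j)) := by
    rw [lp.coeFn_smul, Pi.smul_apply, lp.coeFn_add, Pi.add_apply, lp.coeFn_sub, Pi.sub_apply,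
      lp.coeFn_smul, Pi.smul_apply, PVg_apply]
  rw [this, hy]

lemma iter_norm (z : ℕ → Hsp)
    (hrec : ∀ k : ℕ, z (k + 1) = (1 / 2 : ℝ) •
      (z k + ((2 : ℝ) • PVg ((2 : ℝ) • PUg (z k) - z k) - ((2 : ℝ) • PUg (z k) - z k))))
    (k : ℕ) (j : ℕ) : ‖z k j‖ ^ 2 = (cb j ^ 2) ^ k * ‖z 0 j‖ ^ 2 := by
  induction k with
  | zero => simp
  | succ k ih =>
    rw [rec_block z hrec k j, Tb_norm_sq, ih]
    ring

lemma residual_eq (z : ℕ → Hsp)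
    (hrec : ∀ k : ℕ, z (k + 1) = (1 / 2 : ℝ) •
      (z k + ((2 : ℝ) • PVg ((2 : ℝ) • PUg (z k) - z k) - ((2 : ℝ) • PUg (z k) - z k))))
    (k : ℕ) :
    ‖z (k + 1) - z k‖ ^ 2 = ∑' j, sb j ^ 2 * ((cb j ^ 2) ^ k * ‖z 0 j‖ ^ 2) := by
  rw [norm_sq_eq_tsum]
  congr 1
  funext j
  have hj : (z (k + 1) - z k) j = Tb j (z k j) - z k j := by
    rw [lp.coeFn_sub, Pi.sub_apply, rec_block z hrec k j]
  rw [hj, Tb_sub_norm_sq, iter_norm z hrec k j]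

section alpha
variable (α : ℝ)

/-- scaling constant -/
def Aα : ℝ := 8 * (2 : ℝ) ^ (2 * α)

lemma Aα_pos : 0 < Aα α := by
  have : (0:ℝ) < (2 : ℝ) ^ (2 * α) := Real.rpow_pos_of_pos (by norm_num) _
  unfold Aα; linarith

/-- the coefficients -/
def aα (j : ℕ) : ℝ := Real.sqrt (Aα α) / ((j : ℝ) + 1) ^ α

lemma aα_sq (j : ℕ) : aα α j ^ 2 = Aα α / ((j : ℝ) + 1) ^ (2 * α) := by
  have hb : (0:ℝ) < (j : ℝ) + 1 := by positivity
  rw [aα, div_pow, Real.sq_sqrt (Aα_pos α).le]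
  congr 1
  rw [← Real.rpow_natCast (((j : ℝ) + 1) ^ α) 2, ← Real.rpow_mul hb.le]
  norm_num [mul_comm]

lemma summable_aα_sq (hα : 1 / 2 < α) : Summable (fun j => aα α j ^ 2) := by
  have h1 : Summable (fun n : ℕ => 1 / (n : ℝ) ^ (2 * α)) :=
    Real.summable_one_div_nat_rpow.2 (by linarith)
  have h2 : Summable (fun n : ℕ => 1 / ((n : ℝ) + 1) ^ (2 * α)) := by
    have := (summable_nat_add_iff 1).2 h1
    refine this.congr fun n => ?_
    push_cast
    ring_nf
  have h3 := h2.mul_left (Aα α)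
  refine h3.congr fun j => ?_
  rw [aα_sq]
  ring

/-- the initial point -/
def z0α (hα : 1 / 2 < α) : Hsp :=
  ⟨fun j => mk2 (aα α j) 0, by
    apply memℓp_gen
    have h2 : (2 : ℝ≥0∞).toReal = 2 := by norm_num
    rw [h2]
    refine (summable_aα_sq α hα).congr fun j => ?_
    rw [Real.rpow_two, enorm2]
    simp only [mk2_apply0, mk2_apply1]
    have ha : 0 ≤ aα α j := by
      rw [aα]; positivity
    nlinarith [Real.sq_sqrt (mul_self_nonneg (aα α j))]⟩

lemma z0α_norm_sq (hα : 1 / 2 < α) (j : ℕ) :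
    ‖(z0α α hα : Hsp) j‖ ^ 2 = Aα α / ((j : ℝ) + 1) ^ (2 * α) := by
  have : (z0α α hα : Hsp) j = mk2 (aα α j) 0 := rfl
  rw [this, enorm2]
  simp only [mk2_apply0, mk2_apply1]
  rw [← aα_sq]
  ring

end alpha

/-- the quarter bound -/
lemma quarter_bound (k : ℕ) (hk : 1 ≤ k) : (1 / 4 : ℝ) ≤ (1 - 1 / ((k : ℝ) + 1)) ^ k := by
  have hk0 : (0:ℝ) < (k : ℝ) := by exact_mod_cast hk
  have hx : (0:ℝ) < (k : ℝ) + 1 := by linarith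
  have hbase : 1 - 1 / ((k : ℝ) + 1) = (k : ℝ) / ((k : ℝ) + 1) := by
    field_simp
    ring
  have hinv : ((k : ℝ) / ((k : ℝ) + 1)) ^ k * (((k : ℝ) + 1) / (k : ℝ)) ^ k = 1 := by
    rw [← mul_pow]
    have : (k : ℝ) / ((k : ℝ) + 1) * (((k : ℝ) + 1) / (k : ℝ)) = 1 := by
      field_simp
    rw [this, one_pow]
  have hup : (((k : ℝ) + 1) / (k : ℝ)) ^ k ≤ 4 := by
    have h1 : ((k : ℝ) + 1) / (k : ℝ) = 1 / (k : ℝ) + 1 := by field_simp; ring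
    have h2 : (1 / (k : ℝ) + 1) ≤ Real.exp (1 / (k : ℝ)) := Real.add_one_le_exp _
    have h3 : (((k : ℝ) + 1) / (k : ℝ)) ^ k ≤ (Real.exp (1 / (k : ℝ))) ^ k := by
      rw [h1]
      apply pow_le_pow_left₀ (by positivity) h2
    have h4 : (Real.exp (1 / (k : ℝ))) ^ k = Real.exp ((k : ℝ) * (1 / (k : ℝ))) := by
      rw [← Real.exp_nat_mul]
    have h5 : (k : ℝ) * (1 / (k : ℝ)) = 1 := by field_simp
    rw [h4, h5] at h3
    have h6 : Real.exp 1 < 2.7182818286 := Real.exp_one_lt_d9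
    linarith
  have hpow_pos : (0:ℝ) < (((k : ℝ) + 1) / (k : ℝ)) ^ k := by positivity
  rw [hbase]
  have : ((k : ℝ) / ((k : ℝ) + 1)) ^ k = 1 / (((k : ℝ) + 1) / (k : ℝ)) ^ k := by
    rw [eq_div_iff hpow_pos.ne', hinv]
  rw [this]
  apply one_div_le_one_div_of_le (by positivity) hup

lemma key_estimate (α : ℝ) (hα : 1 / 2 < α) (k : ℕ) (hk : 1 ≤ k) :
    1 / ((k : ℝ) + 1) ^ (2 * α) ≤
      ∑' j, sb j ^ 2 * ((cb j ^ 2) ^ k * (Aα α / ((j : ℝ) + 1) ^ (2 * α))) := by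
  have hA := Aα_pos α
  have hk0 : (0:ℝ) < (k : ℝ) := by exact_mod_cast hk
  set g : ℕ → ℝ := fun j => sb j ^ 2 * ((cb j ^ 2) ^ k * (Aα α / ((j : ℝ) + 1) ^ (2 * α)))
    with hg
  have hα2 : (0:ℝ) ≤ 2 * α := by linarith
  have hgnn : ∀ j, 0 ≤ g j := by
    intro j
    have h1 : (0:ℝ) ≤ ((j : ℝ) + 1) ^ (2 * α) := Real.rpow_nonneg (by positivity) _
    have := sb_nonneg j
    have := cb_nonneg j
    positivity
  have hS : Summable (fun j : ℕ => Aα α / ((j : ℝ) + 1) ^ (2 * α)) :=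
    (summable_aα_sq α hα).congr fun j => aα_sq α j
  have hgsum : Summable g := by
    refine hS.of_nonneg_of_le hgnn fun j => ?_
    have hsb1 : sb j ^ 2 ≤ 1 := by rw [sb_sq]; exact t_le_one j
    have hcb1 : (cb j ^ 2) ^ k ≤ 1 := by
      apply pow_le_one₀ (sq_nonneg _)
      rw [cb_sq]
      have := t_pos j
      linarith
    have hd : (0:ℝ) ≤ Aα α / ((j : ℝ) + 1) ^ (2 * α) := by
      have : (0:ℝ) < ((j : ℝ) + 1) ^ (2 * α) := Real.rpow_pos_of_pos (by positivity) _
      positivity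
    calc g j ≤ 1 * (1 * (Aα α / ((j : ℝ) + 1) ^ (2 * α))) := by
          apply mul_le_mul hsb1 _ _ zero_le_one
          · exact mul_le_mul hcb1 le_rfl hd zero_le_one
          · exact mul_nonneg (pow_nonneg (sq_nonneg _) _) hd
      _ = Aα α / ((j : ℝ) + 1) ^ (2 * α) := by ring
  set b : ℝ := (1 / (2 * (k:ℝ))) * ((1/4) * (Aα α / ((2 * (k:ℝ))) ^ (2 * α))) with hb
  have hterm : ∀ j ∈ Finset.Ico k (2 * k), b ≤ g j := by
    intro j hj
    rw [Finset.mem_Ico] at hj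
    have hjk : (k : ℝ) ≤ (j : ℝ) := by exact_mod_cast hj.1
    have hj2k : (j : ℝ) + 1 ≤ 2 * (k : ℝ) := by
      have : (j : ℝ) + 1 ≤ (2 * k : ℕ) := by exact_mod_cast hj.2
      simpa using this
    have h1 : (1:ℝ) / (2 * (k:ℝ)) ≤ sb j ^ 2 := by
      rw [sb_sq]
      apply one_div_le_one_div_of_le (by positivity) hj2k
    have h2 : (1/4 : ℝ) ≤ (cb j ^ 2) ^ k := by
      refine le_trans (quarter_bound k hk) ?_
      apply pow_le_pow_left₀ (by have := t_pos k; have := t_le_one k; linarith)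
      rw [cb_sq]
      have : 1 / ((j:ℝ) + 1) ≤ 1 / ((k:ℝ) + 1) :=
        one_div_le_one_div_of_le (by positivity) (by linarith)
      linarith
    have h3 : Aα α / (2 * (k:ℝ)) ^ (2 * α) ≤ Aα α / ((j : ℝ) + 1) ^ (2 * α) := by
      apply div_le_div_of_nonneg_left hA.le
      · exact Real.rpow_pos_of_pos (by positivity) _
      · exact Real.rpow_le_rpow (by positivity) hj2k hα2
    have hd : (0:ℝ) ≤ Aα α / (2 * (k:ℝ)) ^ (2 * α) := by
      have : (0:ℝ) < (2 * (k:ℝ)) ^ (2 * α) := Real.rpow_pos_of_pos (by positivity) _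
      positivity
    calc b ≤ sb j ^ 2 * ((1/4) * (Aα α / (2 * (k:ℝ)) ^ (2 * α))) := by
          rw [hb]
          apply mul_le_mul h1 le_rfl (by positivity) (sq_nonneg _)
      _ ≤ sb j ^ 2 * ((cb j ^ 2) ^ k * (Aα α / ((j : ℝ) + 1) ^ (2 * α))) := by
          apply mul_le_mul le_rfl _ (by positivity) (sq_nonneg _)
          exact mul_le_mul h2 h3 hd (pow_nonneg (sq_nonneg _) _)
  have hcard : (Finset.Ico k (2 * k)).card = k := by
    rw [Nat.card_Ico]; omega
  have hsum1 : (k : ℝ) * b ≤ ∑ j ∈ Finset.Ico k (2 * k), g j := by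
    have := Finset.card_nsmul_le_sum (Finset.Ico k (2 * k)) g b hterm
    rwa [hcard, nsmul_eq_mul] at this
  have hsum2 : ∑ j ∈ Finset.Ico k (2 * k), g j ≤ ∑' j, g j :=
    Summable.sum_le_tsum _ (fun j _ => hgnn j) hgsum
  have hfinal : 1 / ((k : ℝ) + 1) ^ (2 * α) ≤ (k : ℝ) * b := by
    have hsplit : (2 * (k:ℝ)) ^ (2 * α) = (2:ℝ) ^ (2 * α) * (k:ℝ) ^ (2 * α) :=
      Real.mul_rpow (by norm_num) hk0.le
    have h2pos : (0:ℝ) < (2:ℝ) ^ (2 * α) := Real.rpow_pos_of_pos (by norm_num) _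
    have hkpos : (0:ℝ) < (k:ℝ) ^ (2 * α) := Real.rpow_pos_of_pos hk0 _
    have hkb : (k : ℝ) * b = 1 / (k:ℝ) ^ (2 * α) := by
      rw [hb, Aα, hsplit]
      field_simp
      ring
    rw [hkb]
    apply one_div_le_one_div_of_le hkpos
    exact Real.rpow_le_rpow hk0.le (by linarith) hα2
  exact le_trans hfinal (le_trans hsum1 hsum2)

end DRSaux

end

/-- Theorem (lower FPR complexity of DRS): in the Hilbert space `H = ℓ²(ℕ; ℝ²)` there exist
closed subspaces `U, V` with `U ∩ V = {0}` such that for every `α > 1/2` there is a point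
`z^0 ∈ H` such that the Douglas–Rachford iterates
`z^{k+1} = T z^k`, `T z = (1/2)(z + R_V(R_U z))` with `R_W = 2 P_W − I`, satisfy
`‖T z^k − z^k‖² ≥ 1/(k+1)^{2α}` for all `k ≥ 1`. -/
theorem drs_lower_fpr_complexity :
    ∃ (U V : Submodule ℝ (lp (fun _ : ℕ => EuclideanSpace ℝ (Fin 2)) 2)),
      IsClosed (U : Set (lp (fun _ : ℕ => EuclideanSpace ℝ (Fin 2)) 2)) ∧
      IsClosed (V : Set (lp (fun _ : ℕ => EuclideanSpace ℝ (Fin 2)) 2)) ∧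
      U ⊓ V = ⊥ ∧
      ∀ α : ℝ, 1 / 2 < α →
        ∃ z0 : lp (fun _ : ℕ => EuclideanSpace ℝ (Fin 2)) 2,
        ∃ PU PV : lp (fun _ : ℕ => EuclideanSpace ℝ (Fin 2)) 2 →
            lp (fun _ : ℕ => EuclideanSpace ℝ (Fin 2)) 2,
          (∀ x, PU x ∈ U ∧ x - PU x ∈ Uᗮ) ∧
          (∀ x, PV x ∈ V ∧ x - PV x ∈ Vᗮ) ∧
          (∀ z : ℕ → lp (fun _ : ℕ => EuclideanSpace ℝ (Fin 2)) 2,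
            z 0 = z0 →
            (∀ k : ℕ, z (k + 1) = (1 / 2 : ℝ) •
              (z k + ((2 : ℝ) • PV ((2 : ℝ) • PU (z k) - z k) - ((2 : ℝ) • PU (z k) - z k)))) →
            ∀ k : ℕ, 1 ≤ k →
              1 / ((k : ℝ) + 1) ^ (2 * α) ≤ ‖z (k + 1) - z k‖ ^ 2) := by
  classical
  refine ⟨DRSaux.Usub, DRSaux.Vsub, DRSaux.Usub_closed, DRSaux.Vsub_closed, DRSaux.UV_inf, ?_⟩
  intro α hα
  refine ⟨DRSaux.z0α α hα, DRSaux.PUg, DRSaux.PVg,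
    fun x => ⟨DRSaux.PUg_mem x, DRSaux.PUg_orth x⟩,
    fun x => ⟨DRSaux.PVg_mem x, DRSaux.PVg_orth x⟩, ?_⟩
  intro z hz0 hrec k hk
  rw [DRSaux.residual_eq z hrec k]
  refine le_trans (DRSaux.key_estimate α hα k hk) (le_of_eq ?_)
  apply tsum_congr
  intro j
  rw [hz0, DRSaux.z0α_norm_sq α hα j]
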